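/- Let F be the cumulative distribution function of a log-normal distribution with parameters M ∈ ℝ and V > 0 (i.e., the distribution of e^Z where Z is normal with mean M and variance V). Then for every q ∈ (0,1), ∫₀^q F^{-1}(p) dp = e^{M + V/2} · Φ(Φ^{-1}(q) − √V), where Φ is the standard normal cumulative distribution function and F^{-1} is the quantile function of F. -/

import Mathlib

open MeasureTheory Set Real ProbabilityTheory Filter Topology

noncomputable section

/-- CDF of a distribution (measure) on `ℝ`. -/
def mcdf (μ : Measure ℝ) : ℝ → ℝ := fun x => (μ (Iic x)).toReal

/-- Left-continuous quantile function of a distribution function `F`. -/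
def quantile (F : ℝ → ℝ) (p : ℝ) : ℝ := sInf {x : ℝ | p ≤ F x}

/-- The log-normal distribution with parameters `m` (log-mean) and `v` (log-variance):
the law of `exp Z` with `Z` normal of mean `m` and variance `v`. -/
def lognormal (m v : ℝ) : Measure ℝ :=
  (gaussianReal m v.toNNReal).map Real.exp

/-- The standard normal CDF `Φ`. -/
def stdNormalCdf : ℝ → ℝ := mcdf (gaussianReal 0 1)

/-- The quantile function `Φ⁻¹` of the standard normal distribution. -/
def stdNormalQuantile : ℝ → ℝ := quantile stdNormalCdf

local notation "Φ" => stdNormalCdf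
local notation "φ" => gaussianPDFReal 0 1

lemma mcdf_eq_cdf (μ : Measure ℝ) [IsProbabilityMeasure μ] : mcdf μ = cdf μ := by
  ext x; rw [mcdf, cdf_eq_real, measureReal_def]

lemma stdNormalCdf_eq_integral (x : ℝ) : Φ x = ∫ t in Iic x, φ t := by
  rw [stdNormalCdf, mcdf, gaussianReal_apply_eq_integral 0 one_ne_zero,
    ENNReal.toReal_ofReal (integral_nonneg fun t => gaussianPDFReal_nonneg _ _ _)]

lemma phi_continuous : Continuous φ := by
  rw [gaussianPDFReal_def]
  continuity

lemma stdNormalCdf_hasDerivAt (x : ℝ) : HasDerivAt Φ (φ x) x := by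
  have hint : Integrable φ := integrable_gaussianPDFReal 0 1
  have key : ∀ y : ℝ, Φ y = Φ 0 + ∫ t in (0:ℝ)..y, φ t := by
    intro y
    rw [stdNormalCdf_eq_integral, stdNormalCdf_eq_integral]
    have := intervalIntegral.integral_Iic_sub_Iic (μ := volume) (f := φ) (a := 0) (b := y)
      hint.integrableOn hint.integrableOn
    linarith
  have : HasDerivAt (fun y => Φ 0 + ∫ t in (0:ℝ)..y, φ t) (φ x) x := by
    have := intervalIntegral.integral_hasDerivAt_right
      (hint.intervalIntegrable (a := 0) (b := x))
      (phi_continuous.stronglyMeasurable.stronglyMeasurableAtFilter (μ := volume) (l := 𝓝 x))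
      phi_continuous.continuousAt
    exact this.const_add _
  exact this.congr_of_eventuallyEq (Filter.Eventually.of_forall fun y => (key y))

lemma stdNormalCdf_strictMono : StrictMono Φ := by
  refine strictMono_of_deriv_pos fun x => ?_
  rw [(stdNormalCdf_hasDerivAt x).deriv]
  exact gaussianPDFReal_pos _ _ _ one_ne_zero

lemma stdNormalCdf_continuous : Continuous Φ :=
  continuous_iff_continuousAt.2 fun x => (stdNormalCdf_hasDerivAt x).continuousAt

lemma stdNormalCdf_tendsto_atBot : Tendsto Φ atBot (𝓝 0) := by
  rw [show Φ = cdf (gaussianReal 0 1) from mcdf_eq_cdf _]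
  exact tendsto_cdf_atBot _

lemma stdNormalCdf_tendsto_atTop : Tendsto Φ atTop (𝓝 1) := by
  rw [show Φ = cdf (gaussianReal 0 1) from mcdf_eq_cdf _]
  exact tendsto_cdf_atTop _

lemma stdNormalCdf_nonneg (x : ℝ) : 0 ≤ Φ x := ENNReal.toReal_nonneg

lemma stdNormalCdf_le_one (x : ℝ) : Φ x ≤ 1 := by
  rw [show Φ = cdf (gaussianReal 0 1) from mcdf_eq_cdf _]
  exact cdf_le_one _ _

lemma stdNormalCdf_mem_Ioo (x : ℝ) : Φ x ∈ Ioo (0:ℝ) 1 := by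
  constructor
  · calc (0:ℝ) ≤ Φ (x - 1) := stdNormalCdf_nonneg _
    _ < Φ x := stdNormalCdf_strictMono (by linarith)
  · calc Φ x < Φ (x + 1) := stdNormalCdf_strictMono (by linarith)
    _ ≤ 1 := stdNormalCdf_le_one _

lemma stdNormalCdf_surjOn : ∀ p ∈ Ioo (0:ℝ) 1, ∃ x, Φ x = p := by
  intro p hp
  obtain ⟨a, ha⟩ := (stdNormalCdf_tendsto_atBot.eventually_lt_const hp.1).exists
  obtain ⟨b, hb⟩ := (stdNormalCdf_tendsto_atTop.eventually_const_lt hp.2).exists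
  have hab : a ≤ b := by
    by_contra h
    exact absurd (stdNormalCdf_strictMono.monotone (le_of_not_ge h)) (by nlinarith)
  obtain ⟨x, _, hx⟩ := intermediate_value_Icc hab stdNormalCdf_continuous.continuousOn
    ⟨ha.le, hb.le⟩
  exact ⟨x, hx⟩

lemma quantile_eq_of_eq {x p : ℝ} (hx : Φ x = p) : stdNormalQuantile p = x := by
  rw [stdNormalQuantile, quantile]
  have : {y : ℝ | p ≤ Φ y} = Ici x := by
    ext y
    simp only [mem_setOf_eq, mem_Ici, ← hx, stdNormalCdf_strictMono.le_iff_le]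
  rw [this, csInf_Ici]

lemma stdNormalCdf_quantile {p : ℝ} (hp : p ∈ Ioo (0:ℝ) 1) : Φ (stdNormalQuantile p) = p := by
  obtain ⟨x, hx⟩ := stdNormalCdf_surjOn p hp
  rw [quantile_eq_of_eq hx, hx]

variable {M V : ℝ}

lemma gaussianReal_eq_map (hV : 0 < V) :
    gaussianReal M V.toNNReal = (gaussianReal 0 1).map (fun t => Real.sqrt V * t + M) := by
  have hs : (0:ℝ) < Real.sqrt V := Real.sqrt_pos.2 hV
  have h1 : (gaussianReal 0 1).map (Real.sqrt V * ·) = gaussianReal 0 V.toNNReal := by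
    rw [gaussianReal_map_const_mul]
    congr 1
    · ring
    · ext
      simp [Real.sq_sqrt hV.le, Real.toNNReal_of_nonneg hV.le]
  have h2 := Measure.map_map (f := (Real.sqrt V * ·)) (g := (· + M))
    (measurable_add_const M) (measurable_const_mul (Real.sqrt V)) (μ := gaussianReal 0 1)
  rw [h1, gaussianReal_map_add_const, zero_add] at h2
  rw [h2]
  rfl

lemma mcdf_gaussian (hV : 0 < V) (x : ℝ) :
    mcdf (gaussianReal M V.toNNReal) x = Φ ((x - M) / Real.sqrt V) := by
  have hs : (0:ℝ) < Real.sqrt V := Real.sqrt_pos.2 hV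
  rw [gaussianReal_eq_map hV, mcdf,
    Measure.map_apply (by fun_prop) measurableSet_Iic]
  have : (fun t => Real.sqrt V * t + M) ⁻¹' Iic x = Iic ((x - M) / Real.sqrt V) := by
    ext t
    simp only [mem_preimage, mem_Iic]
    rw [le_div_iff₀ hs]
    constructor <;> intro h <;> nlinarith
  rw [this]; rfl

lemma mcdf_lognormal_pos (hV : 0 < V) {y : ℝ} (hy : 0 < y) :
    mcdf (lognormal M V) y = Φ ((Real.log y - M) / Real.sqrt V) := by
  rw [lognormal, mcdf, Measure.map_apply measurable_exp measurableSet_Iic]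
  have : Real.exp ⁻¹' Iic y = Iic (Real.log y) := by
    ext t
    simp only [mem_preimage, mem_Iic]
    exact (Real.le_log_iff_exp_le hy).symm
  rw [this, ← mcdf_gaussian hV]
  rfl

lemma mcdf_lognormal_nonpos (hV : 0 < V) {y : ℝ} (hy : y ≤ 0) :
    mcdf (lognormal M V) y = 0 := by
  rw [lognormal, mcdf, Measure.map_apply measurable_exp measurableSet_Iic]
  have : Real.exp ⁻¹' Iic y = ∅ := by
    ext t
    simp only [mem_preimage, mem_Iic, mem_empty_iff_false, iff_false, not_le]
    exact lt_of_le_of_lt hy (Real.exp_pos t)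
  simp [this]

lemma quantile_lognormal (hV : 0 < V) {p : ℝ} (hp : p ∈ Ioo (0:ℝ) 1) :
    quantile (mcdf (lognormal M V)) p
      = Real.exp (M + Real.sqrt V * stdNormalQuantile p) := by
  have hs : (0:ℝ) < Real.sqrt V := Real.sqrt_pos.2 hV
  set x₀ := Real.exp (M + Real.sqrt V * stdNormalQuantile p) with hx₀
  have hset : {y : ℝ | p ≤ mcdf (lognormal M V) y} = Ici x₀ := by
    ext y
    simp only [mem_setOf_eq, mem_Ici]
    rcases le_or_gt y 0 with hy | hy
    · rw [mcdf_lognormal_nonpos hV hy]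
      constructor
      · intro h; linarith [hp.1]
      · intro h; linarith [Real.exp_pos (M + Real.sqrt V * stdNormalQuantile p), hy]
    · rw [mcdf_lognormal_pos hV hy]
      rw [show p = Φ (stdNormalQuantile p) from (stdNormalCdf_quantile hp).symm,
        stdNormalCdf_strictMono.le_iff_le, le_div_iff₀ hs, hx₀,
        ← Real.le_log_iff_exp_le hy]
      constructor <;> intro h <;> nlinarith
  rw [quantile, hset, csInf_Ici]

lemma stdNormalQuantile_le_iff {p : ℝ} (hp : p ∈ Ioo (0:ℝ) 1) (x : ℝ) :
    stdNormalQuantile p ≤ x ↔ p ≤ Φ x := by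
  rw [← stdNormalCdf_strictMono.le_iff_le, stdNormalCdf_quantile hp]

lemma stdNormalQuantile_mono {p q : ℝ} (hp : p ∈ Ioo (0:ℝ) 1) (hq : q ∈ Ioo (0:ℝ) 1)
    (h : p ≤ q) : stdNormalQuantile p ≤ stdNormalQuantile q := by
  rw [stdNormalQuantile_le_iff hp, stdNormalCdf_quantile hq]
  exact h

lemma stdNormalQuantile_continuousAt {p : ℝ} (hp : p ∈ Ioo (0:ℝ) 1) :
    ContinuousAt stdNormalQuantile p := by
  rw [ContinuousAt, tendsto_order]
  constructor
  · intro a ha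
    set a' := (a + stdNormalQuantile p) / 2 with ha'
    have haa' : a < a' := by rw [ha']; linarith
    have h1 : Φ a' < p := by
      rw [← stdNormalCdf_quantile hp]
      exact stdNormalCdf_strictMono (by rw [ha']; linarith)
    have h0 : (0:ℝ) < Φ a' := (stdNormalCdf_mem_Ioo a').1
    filter_upwards [isOpen_Ioo.eventually_mem (show p ∈ Ioo (Φ a') 1 from ⟨h1, hp.2⟩)] with y hy
    have hy01 : y ∈ Ioo (0:ℝ) 1 := ⟨h0.trans hy.1, hy.2⟩
    have : a' ≤ stdNormalQuantile y := by
      rw [← stdNormalCdf_strictMono.le_iff_le, stdNormalCdf_quantile hy01]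
      exact hy.1.le
    linarith
  · intro b hb
    set b' := (stdNormalQuantile p + b) / 2 with hb'
    have hbb' : b' < b := by rw [hb']; linarith
    have h1 : p < Φ b' := by
      rw [← stdNormalCdf_quantile hp]
      exact stdNormalCdf_strictMono (by rw [hb']; linarith)
    filter_upwards [isOpen_Ioo.eventually_mem (show p ∈ Ioo (0:ℝ) (Φ b') from ⟨hp.1, h1⟩)]
      with y hy
    have hy01 : y ∈ Ioo (0:ℝ) 1 := ⟨hy.1, hy.2.trans (stdNormalCdf_mem_Ioo b').2⟩
    have : stdNormalQuantile y ≤ b' := by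
      rw [stdNormalQuantile_le_iff hy01]
      exact hy.2.le
    linarith

lemma stdNormalQuantile_hasDerivAt {p : ℝ} (hp : p ∈ Ioo (0:ℝ) 1) :
    HasDerivAt stdNormalQuantile ((φ (stdNormalQuantile p))⁻¹) p := by
  refine HasDerivAt.of_local_left_inverse (stdNormalQuantile_continuousAt hp)
    (stdNormalCdf_hasDerivAt _) (gaussianPDFReal_pos _ _ _ one_ne_zero).ne' ?_
  filter_upwards [isOpen_Ioo.eventually_mem hp] with y hy
  exact stdNormalCdf_quantile hy

lemma antideriv_hasDerivAt (hV : 0 < V) {p : ℝ} (hp : p ∈ Ioo (0:ℝ) 1) :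
    HasDerivAt (fun y => Real.exp (M + V / 2) * Φ (stdNormalQuantile y - Real.sqrt V))
      (Real.exp (M + Real.sqrt V * stdNormalQuantile p)) p := by
  set t := stdNormalQuantile p
  set s := Real.sqrt V with hsdef
  have h1 := (stdNormalQuantile_hasDerivAt hp).sub_const s
  have h2 := (stdNormalCdf_hasDerivAt (t - s)).comp p h1
  have h3 := h2.const_mul (Real.exp (M + V / 2))
  refine h3.congr_deriv (Eq.symm ?_)
  have hs2 : s ^ 2 = V := Real.sq_sqrt hV.le
  have hφ : ∀ x : ℝ, φ x = (Real.sqrt (2 * π))⁻¹ * Real.exp (-x ^ 2 / 2) := by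
    intro x
    simp only [gaussianPDFReal]
    norm_num
  rw [hφ, hφ]
  have hc : (Real.sqrt (2 * π))⁻¹ ≠ 0 := by
    positivity
  field_simp
  rw [← Real.exp_add, ← Real.exp_add]
  congr 1
  ring_nf
  nlinarith [hs2]

/-- for the CDF `F` of a log-normal distribution with parameters `M ∈ ℝ` and
`V > 0`, one has `∫₀^q F⁻¹(p) dp = e^{M + V/2} Φ(Φ⁻¹(q) − √V)` for every `q ∈ (0,1)`. -/
theorem stmt7 (M V : ℝ) (hV : 0 < V) :
    ∀ q ∈ Ioo (0:ℝ) 1,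
      ∫ p in (0:ℝ)..q, quantile (mcdf (lognormal M V)) p =
        Real.exp (M + V / 2) * stdNormalCdf (stdNormalQuantile q - Real.sqrt V) := by
  intro q hq
  have hs : (0:ℝ) < Real.sqrt V := Real.sqrt_pos.2 hV
  set f : ℝ → ℝ := fun p => Real.exp (M + Real.sqrt V * stdNormalQuantile p) with hf
  set G : ℝ → ℝ := fun p => Real.exp (M + V / 2) * Φ (stdNormalQuantile p - Real.sqrt V)
    with hG
  -- replace integrand
  have hcong : ∫ p in (0:ℝ)..q, quantile (mcdf (lognormal M V)) p = ∫ p in (0:ℝ)..q, f p := by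
    refine intervalIntegral.integral_congr_ae (.of_forall fun x hx => ?_)
    rw [uIoc_of_le hq.1.le] at hx
    exact quantile_lognormal hV ⟨hx.1, hx.2.trans_lt hq.2⟩
  rw [hcong]
  -- continuity of f on (0,1)
  have hfc : ∀ p ∈ Ioo (0:ℝ) 1, ContinuousAt f p := fun p hp =>
    (Real.continuous_exp.continuousAt).comp
      ((continuousAt_const.mul (stdNormalQuantile_continuousAt hp)).const_add M)
  -- bound on Ioc 0 q
  have hbound : ∀ x ∈ Ioc (0:ℝ) q, ‖f x‖ ≤ f q := by
    intro x hx
    have hx01 : x ∈ Ioo (0:ℝ) 1 := ⟨hx.1, hx.2.trans_lt hq.2⟩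
    rw [Real.norm_of_nonneg (Real.exp_pos _).le]
    refine Real.exp_le_exp.2 (by
      have := stdNormalQuantile_mono hx01 hq hx.2
      nlinarith)
  -- integrability on [0, q]
  have hIntOn : IntegrableOn f (Ioc 0 q) volume := by
    have hmeas : AEStronglyMeasurable f (volume.restrict (Ioc 0 q)) :=
      ContinuousOn.aestronglyMeasurable (μ := volume)
        (fun x hx => (hfc x ⟨hx.1, hx.2.trans_lt hq.2⟩).continuousWithinAt) measurableSet_Ioc
    have : IsFiniteMeasure (volume.restrict (Ioc (0:ℝ) q)) := ⟨by simp [Real.volume_Ioc]⟩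
    exact Integrable.mono' (integrable_const (f q)) hmeas
      (ae_restrict_of_forall_mem measurableSet_Ioc hbound)
  have hInt : IntervalIntegrable f volume 0 q := by
    rw [intervalIntegrable_iff, uIoc_of_le hq.1.le]
    exact hIntOn
  -- FTC on [ε, q]
  have hFTC : ∀ ε ∈ Ioo (0:ℝ) q, (∫ p in (0:ℝ)..q, f p) - ∫ p in (0:ℝ)..ε, f p = G q - G ε := by
    intro ε hε
    have h1 : IntervalIntegrable f volume 0 ε :=
      hInt.mono_set (by rw [uIcc_of_le hε.1.le, uIcc_of_le hq.1.le]; exact Icc_subset_Icc le_rfl hε.2.le)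
    have h2 : IntervalIntegrable f volume ε q :=
      hInt.mono_set (by rw [uIcc_of_le hε.2.le, uIcc_of_le hq.1.le]; exact Icc_subset_Icc hε.1.le le_rfl)
    have hadd := intervalIntegral.integral_add_adjacent_intervals h1 h2
    have hsub : ∫ p in ε..q, f p = G q - G ε := by
      refine intervalIntegral.integral_eq_sub_of_hasDerivAt (fun t ht => ?_) h2
      rw [uIcc_of_le hε.2.le] at ht
      exact antideriv_hasDerivAt hV ⟨hε.1.trans_le ht.1, lt_of_le_of_lt ht.2 hq.2⟩
    linarith
  -- the limit ε → 0⁺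
  have hQbot : Tendsto stdNormalQuantile (𝓝[>] (0:ℝ)) atBot := by
    rw [tendsto_atBot]
    intro b
    have hΦb : (0:ℝ) < Φ b := (stdNormalCdf_mem_Ioo b).1
    filter_upwards [Ioo_mem_nhdsGT_of_mem (by constructor <;> [rfl; exact hΦb] : (0:ℝ) ∈ Ico 0 (Φ b))] with ε hε
    exact (stdNormalQuantile_le_iff ⟨hε.1, hε.2.trans_le (stdNormalCdf_le_one b)⟩ b).2 hε.2.le
  have hGlim : Tendsto G (𝓝[>] (0:ℝ)) (𝓝 0) := by
    have h1 : Tendsto (fun ε => stdNormalQuantile ε - Real.sqrt V) (𝓝[>] (0:ℝ)) atBot :=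
      (tendsto_atBot_add_const_right _ _ hQbot)
    have h2 := stdNormalCdf_tendsto_atBot.comp h1
    have := h2.const_mul (Real.exp (M + V / 2))
    simpa using this
  have hIlim : Tendsto (fun ε => ∫ p in (0:ℝ)..ε, f p) (𝓝[>] (0:ℝ)) (𝓝 0) := by
    refine squeeze_zero_norm' (a := fun ε => f q * |ε - 0|) ?_ ?_
    · filter_upwards [Ioo_mem_nhdsGT_of_mem (by constructor <;> [rfl; exact hq.1] : (0:ℝ) ∈ Ico 0 q)] with ε hε
      refine intervalIntegral.norm_integral_le_of_norm_le_const fun x hx => ?_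
      rw [uIoc_of_le hε.1.le] at hx
      exact hbound x ⟨hx.1, hx.2.trans hε.2.le⟩
    · have : Tendsto (fun ε : ℝ => f q * |ε - 0|) (𝓝[>] 0) (𝓝 (f q * |0 - 0|)) := by
        refine Tendsto.const_mul _ ?_
        exact ((continuous_abs.comp (continuous_id.sub continuous_const)).tendsto 0).mono_left
          nhdsWithin_le_nhds
      simpa using this
  -- conclude
  have hmem : Ioo (0:ℝ) q ∈ 𝓝[>] (0:ℝ) :=
    Ioo_mem_nhdsGT_of_mem ⟨le_rfl, hq.1⟩
  have heq : ∀ᶠ ε in 𝓝[>] (0:ℝ),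
      (∫ p in (0:ℝ)..q, f p) - ∫ p in (0:ℝ)..ε, f p = G q - G ε := by
    filter_upwards [hmem] with ε hε using hFTC ε hε
  have t1 : Tendsto (fun ε => (∫ p in (0:ℝ)..q, f p) - ∫ p in (0:ℝ)..ε, f p)
      (𝓝[>] (0:ℝ)) (𝓝 ((∫ p in (0:ℝ)..q, f p) - 0)) := tendsto_const_nhds.sub hIlim
  have t2 : Tendsto (fun ε => (∫ p in (0:ℝ)..q, f p) - ∫ p in (0:ℝ)..ε, f p)
      (𝓝[>] (0:ℝ)) (𝓝 (G q - 0)) := (tendsto_const_nhds.sub hGlim).congr' (heq.mono fun ε h => h.symm)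
  have := tendsto_nhds_unique t1 t2
  simp only [sub_zero] at this
  rw [this]
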